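/- Let Sch be a schema whose constraints are inclusion dependencies and which has result-bounded access methods. If a CQ Q has a monotone plan answering it with respect to Sch (equivalently, is AMonDet), then Q has a monotone plan answering it with respect to the existence-check simplification of Sch: the schema where each result-bounded method mt on relation R with input positions x⃗ is replaced by a Boolean method on a new relation R_mt(x⃗) with no result bound, together with the inclusion dependencies R(x⃗, y⃗) → R_mt(x⃗) and R_mt(x⃗) → ∃y⃗ R(x⃗, y⃗). -/

import Mathlib

/-! Statement 11: for schemas whose constraints are inclusion dependencies,
monotone answerability (equivalently, `AMonDet`) is preserved when passing
to the existence-check simplification: each result-bounded method `mt` on a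
relation `R` with input positions `x⃗` is replaced by a Boolean method
(without result bound) on a new relation `R_mt(x⃗)`, adding the inclusion
dependencies `R(x⃗,y⃗) → R_mt(x⃗)` and `R_mt(x⃗) → ∃y⃗ R(x⃗,y⃗)`. -/

/-- A relational signature: a type of relation symbols with arities. -/
structure RelSig where
  Rel : Type
  ar : Rel → ℕ

/-- A fact over signature `S` with domain `D`. -/
abbrev DBFact (S : RelSig) (D : Type) := Σ R : S.Rel, Fin (S.ar R) → D

/-- An instance: a set of facts. -/
abbrev DBInst (S : RelSig) (D : Type) := Set (DBFact S D)

/-- The active domain of an instance. -/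
def adom {S : RelSig} {D : Type} (I : DBInst S D) : Set D :=
  {d | ∃ f ∈ I, ∃ i, f.2 i = d}

/-- A Boolean conjunctive query over `S`: finitely many atoms over
variables `Fin nv` (all existentially quantified). -/
structure CQ (S : RelSig) where
  nv : ℕ
  atoms : Finset ((R : S.Rel) × (Fin (S.ar R) → Fin nv))

/-- A Boolean CQ holds in an instance iff there is a homomorphism from its
canonical database into the instance. -/
def CQ.holds {S : RelSig} {D : Type} (Q : CQ S) (I : DBInst S D) : Prop :=
  ∃ h : Fin Q.nv → D, ∀ a ∈ Q.atoms, (⟨a.1, fun i => h (a.2 i)⟩ : DBFact S D) ∈ I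

/-- `h` is a homomorphism from `J` to `I`. -/
def IsHom {S : RelSig} {D E : Type} (h : D → E) (J : DBInst S D) (I : DBInst S E) : Prop :=
  ∀ f ∈ J, (⟨f.1, fun i => h (f.2 i)⟩ : DBFact S E) ∈ I

/-- The blowup of an instance: each element `a` is replaced by countably many
copies `(a, j)` (with `(a, 0)` playing the role of `a` itself), each fact by
all coordinatewise copies. -/
def Blowup {S : RelSig} {D : Type} (I : DBInst S D) : DBInst S (D × ℕ) :=
  { f | ∃ (a : Fin (S.ar f.1) → D) (k : Fin (S.ar f.1) → ℕ),
      (⟨f.1, a⟩ : DBFact S D) ∈ I ∧ f.2 = fun i => (a i, k i) }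

/-- An access method: relation, (finite) set of input positions, optional
result bound. -/
structure Method (S : RelSig) where
  rel : S.Rel
  input : Finset (Fin (S.ar rel))
  bound : Option ℕ

/-- `X` contains at least `j` elements. -/
def AtLeast {α : Type _} (X : Set α) (j : ℕ) : Prop :=
  ∃ T : Finset α, ↑T ⊆ X ∧ T.card = j

/-- Matching tuples of the access `(mt, b)` on `I`. -/
def matchTuples {S : RelSig} {D : Type} (mt : Method S) (b : Fin (S.ar mt.rel) → D)
    (I : DBInst S D) : Set (Fin (S.ar mt.rel) → D) :=
  {args | (⟨mt.rel, args⟩ : DBFact S D) ∈ I ∧ ∀ i ∈ mt.input, args i = b i}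

/-- Valid outputs of an access with matching tuples `M` (result bounds give
both a lower and an upper bound on the returned tuples). -/
def ValidOutput {S : RelSig} {D : Type} (mt : Method S)
    (M J : Set (Fin (S.ar mt.rel) → D)) : Prop :=
  J ⊆ M ∧
    match mt.bound with
    | none => J = M
    | some k => (∀ j ≤ k, AtLeast M j → AtLeast J j) ∧ ¬ AtLeast J (k + 1)

/-- `Iacc` is access-valid in `I1`. -/
def AccessValid {S : RelSig} {D : Type} (Ms : Set (Method S))
    (Iacc I1 : DBInst S D) : Prop :=
  ∀ mt ∈ Ms, ∀ b : Fin (S.ar mt.rel) → D, (∀ i ∈ mt.input, b i ∈ adom Iacc) →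
    ∃ J, ValidOutput mt (matchTuples mt b I1) J ∧
      ∀ args ∈ J, (⟨mt.rel, args⟩ : DBFact S D) ∈ Iacc

/-- Access monotonic-determinacy, the characterization of monotone
answerability. -/
def AMonDet {S : RelSig} (Ms : Set (Method S))
    (C : ∀ D : Type, DBInst S D → Prop) (Q : CQ S) : Prop :=
  ∀ (D : Type) (I1 I2 : DBInst S D), C D I1 → C D I2 →
    (∃ Iacc, Iacc ⊆ I1 ∧ Iacc ⊆ I2 ∧ AccessValid Ms Iacc I1) →
    Q.holds I1 → Q.holds I2

/-- An inclusion dependency (single body atom, single head atom, no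
repeated variables). -/
structure IncDep (S : RelSig) where
  body : S.Rel
  head : S.Rel
  width : ℕ
  bpos : Fin width → Fin (S.ar body)
  hpos : Fin width → Fin (S.ar head)
  bpos_inj : Function.Injective bpos
  hpos_inj : Function.Injective hpos

/-- Satisfaction of an inclusion dependency. -/
def IncDep.Sat {S : RelSig} {D : Type} (δ : IncDep S) (I : DBInst S D) : Prop :=
  ∀ args : Fin (S.ar δ.body) → D, (⟨δ.body, args⟩ : DBFact S D) ∈ I →
    ∃ args' : Fin (S.ar δ.head) → D, (⟨δ.head, args'⟩ : DBFact S D) ∈ I ∧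
      ∀ t, args' (δ.hpos t) = args (δ.bpos t)

section Simplification

variable (S : RelSig) (Ms : Set (Method S))

/-- The result-bounded methods of the schema; each gives rise to a new
relation `R_mt` in the simplification. -/
abbrev BddMeth : Type := {mt : Method S // mt ∈ Ms ∧ mt.bound ≠ none}

/-- The signature of the existence-check simplification: the original
relations plus, for each result-bounded method `mt`, a relation `R_mt`
whose arity is the number of input positions of `mt`. -/
def simpSig : RelSig :=
  ⟨S.Rel ⊕ BddMeth S Ms, Sum.elim S.ar (fun b => b.1.input.card)⟩

/-- Lifting the original inclusion dependencies to the enlarged signature. -/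
def liftID (δ : IncDep S) : IncDep (simpSig S Ms) where
  body := Sum.inl δ.body
  head := Sum.inl δ.head
  width := δ.width
  bpos := δ.bpos
  hpos := δ.hpos
  bpos_inj := δ.bpos_inj
  hpos_inj := δ.hpos_inj

/-- The inclusion dependency `R(x⃗, y⃗) → R_mt(x⃗)`. -/
def toViewID (b : BddMeth S Ms) : IncDep (simpSig S Ms) where
  body := Sum.inl b.1.rel
  head := Sum.inr b
  width := b.1.input.card
  bpos := fun t => ((b.1.input.orderIsoOfFin rfl) t).val
  hpos := fun t => t
  bpos_inj := fun s t h => (b.1.input.orderIsoOfFin rfl).injective (Subtype.ext h)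
  hpos_inj := fun _ _ h => h

/-- The inclusion dependency `R_mt(x⃗) → ∃ y⃗ R(x⃗, y⃗)`. -/
def viewToRelID (b : BddMeth S Ms) : IncDep (simpSig S Ms) where
  body := Sum.inr b
  head := Sum.inl b.1.rel
  width := b.1.input.card
  bpos := fun t => t
  hpos := fun t => ((b.1.input.orderIsoOfFin rfl) t).val
  bpos_inj := fun _ _ h => h
  hpos_inj := fun s t h => (b.1.input.orderIsoOfFin rfl).injective (Subtype.ext h)

/-- A non-result-bounded method of the original schema, carried over. -/
def liftMethod (mt : Method S) : Method (simpSig S Ms) where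
  rel := Sum.inl mt.rel
  input := mt.input
  bound := none

/-- The Boolean method (all positions are inputs, no result bound) on the
new relation `R_mt`. -/
def boolMethod (b : BddMeth S Ms) : Method (simpSig S Ms) where
  rel := Sum.inr b
  input := Finset.univ
  bound := none

/-- The methods of the existence-check simplification. -/
def simpMethods : Set (Method (simpSig S Ms)) :=
  {m | ∃ mt ∈ Ms, mt.bound = none ∧ m = liftMethod S Ms mt} ∪
    {m | ∃ b : BddMeth S Ms, m = boolMethod S Ms b}

/-- The constraints of the existence-check simplification: the original IDs
plus the to-view and view-to-relation IDs for each result-bounded method. -/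
def simpConstraints (Sid : Set (IncDep S)) (I : DBInst (simpSig S Ms) D) : Prop :=
  (∀ δ ∈ Sid, (liftID S Ms δ).Sat I) ∧
    ∀ b : BddMeth S Ms, (toViewID S Ms b).Sat I ∧ (viewToRelID S Ms b).Sat I

/-- A CQ over the original signature, viewed over the enlarged signature. -/
noncomputable def liftCQ (Q : CQ S) : CQ (simpSig S Ms) :=
  letI := Classical.decEq ((R : (simpSig S Ms).Rel) × (Fin ((simpSig S Ms).ar R) → Fin Q.nv))
  ⟨Q.nv, Q.atoms.image (fun a => ⟨Sum.inl a.1, a.2⟩)⟩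

end Simplification

namespace Stmt11

open Classical in
noncomputable instance : ∀ (p : Prop), Decidable p := fun p => Classical.propDecidable p

variable {S : RelSig} {Ms : Set (Method S)} {D : Type}

inductive Val (S : RelSig) (Ms : Set (Method S)) (D : Type) : Type where
  | base : D → Val S Ms D
  | nullE : (b : BddMeth S Ms) → (Fin b.1.input.card → D) → ℕ → Fin (S.ar b.1.rel) → Val S Ms D
  | nullC : (δ : IncDep S) → (Fin (S.ar δ.body) → Val S Ms D) → ℕ → Fin (S.ar δ.head) → Val S Ms D
  | nullB : (b : BddMeth S Ms) → (Fin (S.ar b.1.rel) → Val S Ms D) → ℕ → Fin (S.ar b.1.rel) → Val S Ms D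

/-- order iso for the input positions of a bounded method -/
noncomputable def oi (b : BddMeth S Ms) : Fin b.1.input.card ≃o {x // x ∈ b.1.input} :=
  b.1.input.orderIsoOfFin rfl

noncomputable def eArgs (b : BddMeth S Ms) (v : Fin b.1.input.card → D) (n : ℕ) :
    Fin (S.ar b.1.rel) → Val S Ms D := fun i =>
  if h : i ∈ b.1.input then Val.base (v ((oi b).symm ⟨i, h⟩)) else Val.nullE b v n i

noncomputable def cArgs (δ : IncDep S) (args : Fin (S.ar δ.body) → Val S Ms D) (n : ℕ) :
    Fin (S.ar δ.head) → Val S Ms D := fun i =>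
  if h : ∃ t, δ.hpos t = i then args (δ.bpos h.choose) else Val.nullC δ args n i

noncomputable def bArgs (b : BddMeth S Ms) (args : Fin (S.ar b.1.rel) → Val S Ms D) (n : ℕ) :
    Fin (S.ar b.1.rel) → Val S Ms D := fun i =>
  if i ∈ b.1.input then args i else Val.nullB b args n i

lemma eArgs_input (b : BddMeth S Ms) (v : Fin b.1.input.card → D) (n : ℕ)
    (t : Fin b.1.input.card) : eArgs b v n ((oi b t).val) = Val.base (v t) := by
  have h : ((oi b t).val) ∈ b.1.input := (oi b t).2
  rw [eArgs, dif_pos h]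
  congr 1
  have : (⟨(oi b t).val, h⟩ : {x // x ∈ b.1.input}) = oi b t := rfl
  rw [this, OrderIso.symm_apply_apply]

lemma eArgs_mem (b : BddMeth S Ms) (v : Fin b.1.input.card → D) (n : ℕ)
    {i : Fin (S.ar b.1.rel)} (h : i ∈ b.1.input) :
    eArgs b v n i = Val.base (v ((oi b).symm ⟨i, h⟩)) := dif_pos h

lemma eArgs_not_mem (b : BddMeth S Ms) (v : Fin b.1.input.card → D) (n : ℕ)
    {i : Fin (S.ar b.1.rel)} (h : ¬ i ∈ b.1.input) :
    eArgs b v n i = Val.nullE b v n i := dif_neg h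

lemma cArgs_hpos (δ : IncDep S) (args : Fin (S.ar δ.body) → Val S Ms D) (n : ℕ)
    (t : Fin δ.width) : cArgs δ args n (δ.hpos t) = args (δ.bpos t) := by
  have h : ∃ t', δ.hpos t' = δ.hpos t := ⟨t, rfl⟩
  rw [cArgs, dif_pos h]
  congr 1
  exact congrArg δ.bpos (δ.hpos_inj h.choose_spec)

lemma bArgs_mem (b : BddMeth S Ms) (args : Fin (S.ar b.1.rel) → Val S Ms D) (n : ℕ)
    {i : Fin (S.ar b.1.rel)} (h : i ∈ b.1.input) : bArgs b args n i = args i := if_pos h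

lemma bArgs_not_mem (b : BddMeth S Ms) (args : Fin (S.ar b.1.rel) → Val S Ms D) (n : ℕ)
    {i : Fin (S.ar b.1.rel)} (h : ¬ i ∈ b.1.input) :
    bArgs b args n i = Val.nullB b args n i := if_neg h

/-- The chase of the accessible part with the original IDs, the
existence-check IDs (with infinitely many witnesses each) and
input-preserving copies. -/
inductive Chase (Sid : Set (IncDep S)) (Iacc : DBInst (simpSig S Ms) D) :
    DBFact S (Val S Ms D) → Prop where
  | base (R : S.Rel) (a : Fin (S.ar R) → D)
      (h : (⟨Sum.inl R, a⟩ : DBFact (simpSig S Ms) D) ∈ Iacc) :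
      Chase Sid Iacc ⟨R, fun i => Val.base (a i)⟩
  | ruleE (b : BddMeth S Ms) (v : Fin b.1.input.card → D) (n : ℕ)
      (h : (⟨Sum.inr b, v⟩ : DBFact (simpSig S Ms) D) ∈ Iacc) :
      Chase Sid Iacc ⟨b.1.rel, eArgs b v n⟩
  | ruleC (δ : IncDep S) (hδ : δ ∈ Sid) (args : Fin (S.ar δ.body) → Val S Ms D) (n : ℕ)
      (h : Chase Sid Iacc ⟨δ.body, args⟩) :
      Chase Sid Iacc ⟨δ.head, cArgs δ args n⟩
  | ruleB (b : BddMeth S Ms) (args : Fin (S.ar b.1.rel) → Val S Ms D) (n : ℕ)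
      (h : Chase Sid Iacc ⟨b.1.rel, args⟩) :
      Chase Sid Iacc ⟨b.1.rel, bArgs b args n⟩

def ChaseSet (Sid : Set (IncDep S)) (Iacc : DBInst (simpSig S Ms) D) :
    DBInst S (Val S Ms D) := {f | Chase Sid Iacc f}

/-- restriction of a simp-signature instance to the original signature -/
def restr (I : DBInst (simpSig S Ms) D) : DBInst S D :=
  {f | (⟨Sum.inl f.1, f.2⟩ : DBFact (simpSig S Ms) D) ∈ I}

/-- lift an instance over `D` to one over `Val` -/
def liftInst (J : DBInst S D) : DBInst S (Val S Ms D) :=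
  {f | ∃ a : Fin (S.ar f.1) → D, (⟨f.1, a⟩ : DBFact S D) ∈ J ∧ f.2 = fun i => Val.base (a i)}

noncomputable def g (I2 : DBInst (simpSig S Ms) D) : Val S Ms D → Option D
  | .base d => some d
  | .nullE b v _ i =>
      if h : ∃ a' : Fin (S.ar b.1.rel) → D,
          (⟨Sum.inl b.1.rel, a'⟩ : DBFact (simpSig S Ms) D) ∈ I2 ∧
          ∀ t, a' ((oi b) t).val = v t then some (h.choose i) else none
  | .nullC δ args _ i =>
      if h : ∃ a' : Fin (S.ar δ.head) → D,
          (⟨Sum.inl δ.head, a'⟩ : DBFact (simpSig S Ms) D) ∈ I2 ∧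
          ∀ t, some (a' (δ.hpos t)) = g I2 (args (δ.bpos t)) then some (h.choose i) else none
  | .nullB b args _ i =>
      if h : ∃ a' : Fin (S.ar b.1.rel) → D,
          (⟨Sum.inl b.1.rel, a'⟩ : DBFact (simpSig S Ms) D) ∈ I2 ∧
          ∀ j ∈ b.1.input, some (a' j) = g I2 (args j) then some (h.choose i) else none

/-- every base value appearing in the chase lies in the active domain of `Iacc` -/
lemma adom_chase {Sid : Set (IncDep S)} {Iacc : DBInst (simpSig S Ms) D}
    {f : DBFact S (Val S Ms D)} (hf : Chase Sid Iacc f) :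
    ∀ (i : Fin (S.ar f.1)) (d : D), f.2 i = Val.base d → d ∈ adom Iacc := by
  induction hf with
  | base R a h =>
      intro i d hd
      have : a i = d := Val.base.inj hd
      exact ⟨⟨Sum.inl R, a⟩, h, i, this⟩
  | ruleE b v n h =>
      intro i d hd
      dsimp only at i hd
      by_cases hi : i ∈ b.1.input
      · rw [eArgs_mem b v n hi] at hd
        exact ⟨⟨Sum.inr b, v⟩, h, _, Val.base.inj hd⟩
      · rw [eArgs_not_mem b v n hi] at hd; exact absurd hd (by simp)
  | ruleC δ hδ args n h ih =>
      intro i d hd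
      dsimp only at i hd ih
      by_cases hi : ∃ t, δ.hpos t = i
      · obtain ⟨t, rfl⟩ := hi
        rw [cArgs_hpos] at hd
        exact ih (δ.bpos t) d hd
      · rw [cArgs, dif_neg hi] at hd; exact absurd hd (by simp)
  | ruleB b args n h ih =>
      intro i d hd
      dsimp only at i hd ih
      by_cases hi : i ∈ b.1.input
      · rw [bArgs_mem b args n hi] at hd; exact ih i d hd
      · rw [bArgs_not_mem b args n hi] at hd; exact absurd hd (by simp)

lemma sat_union {δ : IncDep S} {E : Type} {A B : DBInst S E}
    (hA : δ.Sat A) (hB : δ.Sat B) : δ.Sat (A ∪ B) := by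
  intro args hargs
  rcases hargs with h | h
  · obtain ⟨a', ha', hmatch⟩ := hA args h
    exact ⟨a', Or.inl ha', hmatch⟩
  · obtain ⟨a', ha', hmatch⟩ := hB args h
    exact ⟨a', Or.inr ha', hmatch⟩

lemma sat_restr {δ : IncDep S} {I : DBInst (simpSig S Ms) D}
    (h : (liftID S Ms δ).Sat I) : δ.Sat (restr I : DBInst S D) := by
  intro args hargs
  obtain ⟨a', ha', hmatch⟩ := h args hargs
  exact ⟨a', ha', hmatch⟩

lemma sat_lift {δ : IncDep S} {J : DBInst S D} (h : δ.Sat J) :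
    δ.Sat (liftInst J : DBInst S (Val S Ms D)) := by
  intro args hargs
  obtain ⟨a, ha, heq⟩ := hargs
  dsimp only at a ha heq
  obtain ⟨a', ha', hmatch⟩ := h a ha
  refine ⟨fun i => Val.base (a' i), ⟨a', ha', rfl⟩, fun t => ?_⟩
  rw [heq]; exact congrArg Val.base (hmatch t)

lemma sat_chase {Sid : Set (IncDep S)} {Iacc : DBInst (simpSig S Ms) D}
    {δ : IncDep S} (hδ : δ ∈ Sid) : δ.Sat (ChaseSet Sid Iacc) := by
  intro args hargs
  exact ⟨cArgs δ args 0, Chase.ruleC δ hδ args 0 hargs, fun t => cArgs_hpos δ args 0 t⟩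

lemma chase_g {Sid : Set (IncDep S)} {Iacc I2 : DBInst (simpSig S Ms) D}
    (hsub : Iacc ⊆ I2) (hC2 : simpConstraints S Ms Sid I2)
    {f : DBFact S (Val S Ms D)} (hf : Chase Sid Iacc f) :
    ∃ a' : Fin (S.ar f.1) → D, (⟨Sum.inl f.1, a'⟩ : DBFact (simpSig S Ms) D) ∈ I2 ∧
      ∀ i, g I2 (f.2 i) = some (a' i) := by
  induction hf with
  | base R a h =>
      exact ⟨a, hsub h, fun i => by simp [g]⟩
  | ruleE b v n h =>
      have hv : (⟨Sum.inr b, v⟩ : DBFact (simpSig S Ms) D) ∈ I2 := hsub h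
      obtain ⟨a', ha', hm⟩ := (hC2.2 b).2 v hv
      have hEx : ∃ a' : Fin (S.ar b.1.rel) → D,
          (⟨Sum.inl b.1.rel, a'⟩ : DBFact (simpSig S Ms) D) ∈ I2 ∧
          ∀ t, a' ((oi b) t).val = v t := ⟨a', ha', hm⟩
      refine ⟨hEx.choose, hEx.choose_spec.1, fun i => ?_⟩
      dsimp only
      by_cases hi : i ∈ b.1.input
      · rw [eArgs_mem b v n hi]
        have h2 : hEx.choose i = v ((oi b).symm ⟨i, hi⟩) := by
          have := hEx.choose_spec.2 ((oi b).symm ⟨i, hi⟩)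
          rwa [OrderIso.apply_symm_apply] at this
        simp [g, h2]
      · rw [eArgs_not_mem b v n hi]
        simp only [g]
        rw [dif_pos hEx]
  | ruleC δ hδ args n h ih =>
      dsimp only at ih
      obtain ⟨ab, hab, hgb⟩ := ih
      obtain ⟨ah, hah, hm⟩ := hC2.1 δ hδ ab hab
      simp only [liftID] at ah hah hm
      have hEx : ∃ a' : Fin (S.ar δ.head) → D,
          (⟨Sum.inl δ.head, a'⟩ : DBFact (simpSig S Ms) D) ∈ I2 ∧
          ∀ t, some (a' (δ.hpos t)) = g I2 (args (δ.bpos t)) :=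
        ⟨ah, hah, fun t => by rw [hgb (δ.bpos t), hm t]⟩
      refine ⟨hEx.choose, hEx.choose_spec.1, fun i => ?_⟩
      dsimp only
      by_cases hi : ∃ t, δ.hpos t = i
      · obtain ⟨t, rfl⟩ := hi
        rw [cArgs_hpos]
        exact (hEx.choose_spec.2 t).symm
      · rw [cArgs, dif_neg hi]
        simp only [g]
        rw [dif_pos hEx]
  | ruleB b args n h ih =>
      dsimp only at ih
      obtain ⟨ab, hab, hgb⟩ := ih
      have hEx : ∃ a' : Fin (S.ar b.1.rel) → D,
          (⟨Sum.inl b.1.rel, a'⟩ : DBFact (simpSig S Ms) D) ∈ I2 ∧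
          ∀ j ∈ b.1.input, some (a' j) = g I2 (args j) :=
        ⟨ab, hab, fun j _ => (hgb j).symm⟩
      refine ⟨hEx.choose, hEx.choose_spec.1, fun i => ?_⟩
      dsimp only
      by_cases hi : i ∈ b.1.input
      · rw [bArgs_mem b args n hi]
        exact (hEx.choose_spec.2 i hi).symm
      · rw [bArgs_not_mem b args n hi]
        simp only [g]
        rw [dif_pos hEx]

def Istar (Sid : Set (IncDep S)) (Iacc I : DBInst (simpSig S Ms) D) :
    DBInst S (Val S Ms D) :=
  liftInst (restr I) ∪ ChaseSet Sid Iacc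

lemma validOutput_of_eq_none {mt : Method S} {E : Type}
    {M J : Set (Fin (S.ar mt.rel) → E)} (h : mt.bound = none) (hJ : J = M) :
    ValidOutput mt M J := by
  refine ⟨hJ ▸ subset_rfl, ?_⟩
  rw [h]
  exact hJ

lemma validOutput_of_eq_some {mt : Method S} {E : Type} {k : ℕ}
    {M J : Set (Fin (S.ar mt.rel) → E)} (h : mt.bound = some k) (h1 : J ⊆ M)
    (h2 : ∀ j ≤ k, AtLeast M j → AtLeast J j) (h3 : ¬ AtLeast J (k + 1)) :
    ValidOutput mt M J := by
  refine ⟨h1, ?_⟩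
  rw [h]
  exact ⟨h2, h3⟩

lemma atLeast_zero {α : Type _} (X : Set α) : AtLeast X 0 := ⟨∅, by simp⟩

lemma atLeast_elem {α : Type _} {X : Set α} {j : ℕ} (h : AtLeast X (j + 1)) :
    ∃ x, x ∈ X := by
  obtain ⟨T, hT, hc⟩ := h
  have : T.Nonempty := Finset.card_pos.mp (by omega)
  exact ⟨this.choose, hT this.choose_spec⟩

lemma atLeast_card_le {α : Type _} {X : Set α} {T' : Finset α} (hX : X ⊆ ↑T') {j : ℕ}
    (h : AtLeast X j) : j ≤ T'.card := by
  obtain ⟨T, hT, hc⟩ := h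
  have hTT : T ⊆ T' := fun x hx => by
    have := hX (hT hx); simpa using this
  exact hc ▸ Finset.card_le_card hTT

lemma holds_istar {Q : CQ S} {Sid : Set (IncDep S)} {Iacc I1 : DBInst (simpSig S Ms) D}
    (hQ : (liftCQ S Ms Q).holds I1) : Q.holds (Istar Sid Iacc I1) := by
  obtain ⟨h1, hfacts⟩ := hQ
  refine ⟨fun v => Val.base (h1 v), fun a ha => ?_⟩
  have hmem : (⟨Sum.inl a.1, a.2⟩ :
      (R : (simpSig S Ms).Rel) × (Fin ((simpSig S Ms).ar R) → Fin Q.nv)) ∈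
      (liftCQ S Ms Q).atoms := by
    letI := Classical.decEq ((R : (simpSig S Ms).Rel) × (Fin ((simpSig S Ms).ar R) → Fin Q.nv))
    exact Finset.mem_image.mpr ⟨a, ha, rfl⟩
  have hf := hfacts _ hmem
  exact Or.inl ⟨fun i => h1 (a.2 i), hf, rfl⟩

lemma holds_back {Q : CQ S} {Sid : Set (IncDep S)} {Iacc I2 : DBInst (simpSig S Ms) D}
    (hsub : Iacc ⊆ I2) (hC2 : simpConstraints S Ms Sid I2) (h1 : Fin Q.nv → D)
    (hQ : Q.holds (Istar Sid Iacc I2)) : (liftCQ S Ms Q).holds I2 := by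
  obtain ⟨h2, hfacts⟩ := hQ
  refine ⟨fun v => (g I2 (h2 v)).getD (h1 v), fun A hA => ?_⟩
  letI := Classical.decEq ((R : (simpSig S Ms).Rel) × (Fin ((simpSig S Ms).ar R) → Fin Q.nv))
  have hA' : A ∈ Q.atoms.image (fun a : (R : S.Rel) × (Fin (S.ar R) → Fin Q.nv) =>
      (⟨Sum.inl a.1, a.2⟩ : (R : (simpSig S Ms).Rel) × (Fin ((simpSig S Ms).ar R) → Fin Q.nv))) := hA
  obtain ⟨a, ha, rfl⟩ := (@Finset.mem_image _ _ this _ _ _).mp hA'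
  have hf := hfacts a ha
  dsimp only
  rcases hf with ⟨av, hav, heq⟩ | hch
  · dsimp only at av hav heq
    have hfun : (fun i => (g I2 (h2 (a.2 i))).getD (h1 (a.2 i))) = av := by
      funext i
      have := congrFun heq i
      rw [this]
      simp [g]
    have goal := hav
    rw [← hfun] at goal
    exact goal
  · obtain ⟨a', ha', hg⟩ := chase_g hsub hC2 hch
    dsimp only at a' ha' hg
    have hfun : (fun i => (g I2 (h2 (a.2 i))).getD (h1 (a.2 i))) = a' := by
      funext i
      rw [hg i]
      rfl
    have goal := ha'
    rw [← hfun] at goal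
    exact goal

lemma av_star {Sid : Set (IncDep S)} {Iacc I1 : DBInst (simpSig S Ms) D}
    (hsub1 : Iacc ⊆ I1) (hC1 : simpConstraints S Ms Sid I1)
    (hAV : AccessValid (simpMethods S Ms) Iacc I1) :
    AccessValid Ms (ChaseSet Sid Iacc) (Istar Sid Iacc I1) := by
  intro mt hmt bv hb
  have H1 : ∀ i ∈ mt.input, ∀ d : D, bv i = Val.base d → d ∈ adom Iacc := by
    intro i hi d hd
    obtain ⟨f, hf, j, hj⟩ := hb i hi
    exact adom_chase hf j d (by rw [hj, hd])
  rcases hbound : mt.bound with _ | k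
  · -- no result bound: return all matching tuples
    refine ⟨matchTuples mt bv (Istar Sid Iacc I1),
      validOutput_of_eq_none hbound rfl, ?_⟩
    rintro t ⟨htI, hteq⟩
    rcases htI with ⟨a, ha, heq⟩ | hch
    swap
    · show Chase Sid Iacc ⟨mt.rel, t⟩
      exact hch
    · dsimp only at a ha heq
      have hmem : liftMethod S Ms mt ∈ simpMethods S Ms := Or.inl ⟨mt, hmt, hbound, rfl⟩
      have hcond : ∀ i ∈ (liftMethod S Ms mt).input, a i ∈ adom Iacc := by
        intro i hi
        refine H1 i hi (a i) ?_
        rw [← hteq i hi]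
        exact congrFun heq i
      obtain ⟨J', hVO, hJacc⟩ := hAV _ hmem a hcond
      have hJeq : J' = matchTuples (liftMethod S Ms mt) a I1 := hVO.2
      have haM : a ∈ matchTuples (liftMethod S Ms mt) a I1 := ⟨ha, fun i _ => rfl⟩
      have haIacc : (⟨Sum.inl mt.rel, a⟩ : DBFact (simpSig S Ms) D) ∈ Iacc :=
        hJacc a (by rw [hJeq]; exact haM)
      show Chase Sid Iacc ⟨mt.rel, t⟩
      rw [show t = fun i => Val.base (a i) from heq]
      exact Chase.base mt.rel a haIacc
  · -- result bound `some k`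
    set bb : BddMeth S Ms := ⟨mt, hmt, by rw [hbound]; simp⟩ with hbb
    rcases Nat.eq_zero_or_pos k with rfl | hk
    · -- k = 0 : the empty output is valid
      refine ⟨∅, validOutput_of_eq_some hbound (Set.empty_subset _) ?_ ?_, by simp⟩
      · intro j hj _
        interval_cases j
        exact atLeast_zero _
      · rintro ⟨T, hT, hc⟩
        have : T = ∅ := Finset.subset_empty.mp (fun x hx => by simpa using hT hx)
        rw [this] at hc
        simp at hc
    by_cases hM : ∃ t, t ∈ matchTuples mt bv (Istar Sid Iacc I1)
    swap
    · -- no matching tuples: empty output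
      refine ⟨∅, validOutput_of_eq_some hbound (Set.empty_subset _) ?_ ?_, by simp⟩
      · intro j hj hMj
        rcases j with _ | j
        · exact atLeast_zero _
        · exact absurd (atLeast_elem hMj) hM
      · rintro ⟨T, hT, hc⟩
        have : T = ∅ := Finset.subset_empty.mp (fun x hx => by simpa using hT hx)
        rw [this] at hc
        simp at hc
    obtain ⟨t0, ht0I, ht0eq⟩ := hM
    -- Step 1: some chase tuple matches the binding
    have step1 : ∃ args0 : Fin (S.ar mt.rel) → Val S Ms D,
        Chase Sid Iacc ⟨mt.rel, args0⟩ ∧ ∀ i ∈ mt.input, args0 i = bv i := by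
      rcases ht0I with ⟨a, ha, heq⟩ | hch
      swap
      · exact ⟨t0, hch, ht0eq⟩
      · dsimp only at a ha heq
        set v : Fin bb.1.input.card → D := fun s => a ((oi bb) s).val with hv
        have hmem : boolMethod S Ms bb ∈ simpMethods S Ms := Or.inr ⟨bb, rfl⟩
        have hcond : ∀ s ∈ (boolMethod S Ms bb).input, v s ∈ adom Iacc := by
          intro s _
          refine H1 ((oi bb) s).val ((oi bb) s).2 _ ?_
          rw [← ht0eq _ ((oi bb) s).2]
          exact congrFun heq _
        obtain ⟨J', hVO, hJacc⟩ := hAV _ hmem v hcond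
        have hJeq : J' = matchTuples (boolMethod S Ms bb) v I1 := hVO.2
        obtain ⟨v', hv', hvm⟩ := (hC1.2 bb).1 a ha
        have hv'eq : v' = v := funext fun s => hvm s
        have hvM : v ∈ matchTuples (boolMethod S Ms bb) v I1 := by
          refine ⟨?_, fun i _ => rfl⟩
          rw [← hv'eq]
          exact hv'
        have hvIacc : (⟨Sum.inr bb, v⟩ : DBFact (simpSig S Ms) D) ∈ Iacc :=
          hJacc v (by rw [hJeq]; exact hvM)
        refine ⟨eArgs bb v 0, Chase.ruleE bb v 0 hvIacc, ?_⟩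
        intro i hi
        rw [eArgs_mem bb v 0 hi]
        have h5 : v ((oi bb).symm ⟨i, hi⟩) = a i := by
          rw [hv]
          dsimp only
          rw [OrderIso.apply_symm_apply]
        rw [h5, ← ht0eq i hi]
        exact (congrFun heq i).symm
    obtain ⟨args0, hc0, hm0⟩ := step1
    by_cases hall : ∀ i, i ∈ mt.input
    · -- all positions are inputs: at most one matching tuple
      have hbveq : args0 = bv := funext fun i => hm0 i (hall i)
      have hbvC : Chase Sid Iacc ⟨mt.rel, bv⟩ := by rw [← hbveq]; exact hc0
      have hMsub : ∀ u ∈ matchTuples mt bv (Istar Sid Iacc I1), u = bv :=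
        fun u hu => funext fun i => hu.2 i (hall i)
      refine ⟨{bv}, validOutput_of_eq_some hbound ?_ ?_ ?_, ?_⟩
      · intro x hx
        rw [Set.mem_singleton_iff] at hx
        rw [hx]
        exact ⟨Or.inr hbvC, fun i _ => rfl⟩
      · intro j hj hMj
        have hj1 : j ≤ 1 := by
          refine atLeast_card_le (T' := {bv}) ?_ hMj
          intro x hx
          simp [hMsub x hx]
        interval_cases j
        · exact atLeast_zero _
        · exact ⟨{bv}, by simp, by simp⟩
      · rintro ⟨T, hT, hc⟩
        have hTsub : T ⊆ {bv} := fun x hx => by simpa using hT hx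
        have := Finset.card_le_card hTsub
        simp at this
        omega
      · intro args hargs
        rw [Set.mem_singleton_iff] at hargs
        rw [hargs]
        exact hbvC
    · -- some non-input position: infinitely many fresh copies in the chase
      push_neg at hall
      obtain ⟨i0, hi0⟩ := hall
      have huC : ∀ n, Chase Sid Iacc ⟨mt.rel, bArgs bb args0 n⟩ :=
        fun n => Chase.ruleB bb args0 n hc0
      have huM : ∀ n, bArgs bb args0 n ∈ matchTuples mt bv (Istar Sid Iacc I1) :=
        fun n => ⟨Or.inr (huC n), fun i hi => by
          rw [bArgs_mem bb args0 n hi]; exact hm0 i hi⟩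
      have huinj : Function.Injective (fun n => bArgs bb args0 n) := by
        intro n m hnm
        have hfe := congrFun hnm i0
        dsimp only at hfe
        rw [bArgs_not_mem bb args0 n hi0, bArgs_not_mem bb args0 m hi0] at hfe
        injection hfe
      set Jf : Finset (Fin (S.ar mt.rel) → Val S Ms D) :=
        (Finset.range k).image (fun n => bArgs bb args0 n) with hJf
      have hcard : Jf.card = k := by
        rw [hJf, Finset.card_image_of_injective _ huinj, Finset.card_range]
      refine ⟨↑Jf, validOutput_of_eq_some hbound ?_ ?_ ?_, ?_⟩
      · intro x hx
        rw [hJf] at hx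
        simp only [Finset.coe_image, Finset.coe_range, Set.mem_image, Set.mem_Iio] at hx
        obtain ⟨n, _, rfl⟩ := hx
        exact huM n
      · intro j hj _
        refine ⟨(Finset.range j).image (fun n => bArgs bb args0 n), ?_, ?_⟩
        · intro x hx
          simp only [Finset.coe_image, Finset.coe_range, Set.mem_image, Set.mem_Iio] at hx
          obtain ⟨n, hn, rfl⟩ := hx
          rw [hJf]
          simp only [Finset.coe_image, Finset.coe_range, Set.mem_image, Set.mem_Iio]
          exact ⟨n, lt_of_lt_of_le hn hj, rfl⟩
        · rw [Finset.card_image_of_injective _ huinj, Finset.card_range]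
      · rintro ⟨T, hT, hc⟩
        have hTsub : T ⊆ Jf := fun x hx => by
          have := hT (Finset.mem_coe.mpr hx)
          simpa using this
        have := Finset.card_le_card hTsub
        omega
      · intro args hargs
        rw [Finset.mem_coe, hJf, Finset.mem_image] at hargs
        obtain ⟨n, _, rfl⟩ := hargs
        exact huC n

end Stmt11
/-- If the constraints are inclusion dependencies and the
CQ `Q` is monotone answerable (equivalently, `AMonDet`) with respect to the
original schema, then `Q` is monotone answerable with respect to the
existence-check simplification. -/

theorem stmt11 (S : RelSig) (Sid : Set (IncDep S)) (Ms : Set (Method S)) (Q : CQ S)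
    (h : AMonDet Ms (fun _ I => ∀ δ ∈ Sid, δ.Sat I) Q) :
    AMonDet (simpMethods S Ms) (fun _ I => simpConstraints S Ms Sid I)
      (liftCQ S Ms Q) := by
  rintro D I1 I2 hC1 hC2 ⟨Iacc, hsub1, hsub2, hAV⟩ hQ1
  have hmain := h (Stmt11.Val S Ms D) (Stmt11.Istar Sid Iacc I1) (Stmt11.Istar Sid Iacc I2)
    (fun δ hδ => Stmt11.sat_union (Stmt11.sat_lift (Stmt11.sat_restr (hC1.1 δ hδ)))
      (Stmt11.sat_chase hδ))
    (fun δ hδ => Stmt11.sat_union (Stmt11.sat_lift (Stmt11.sat_restr (hC2.1 δ hδ)))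
      (Stmt11.sat_chase hδ))
    ⟨Stmt11.ChaseSet Sid Iacc, Set.subset_union_right, Set.subset_union_right,
      Stmt11.av_star hsub1 hC1 hAV⟩
    (Stmt11.holds_istar hQ1)
  exact Stmt11.holds_back hsub2 hC2 hQ1.choose hmain
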